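/- For the Lie algebra g with dual generated by α₁,…,α_s, β₁,…,β_s, γ₁,…,γ_{2t} with differential dα_i = 0, dβ_i = −α_i ∧ β_i, dγ_{2k−1} = ψ̄_k ∧ γ_{2k−1} + φ̄_k ∧ γ_{2k}, dγ_{2k} = −φ̄_k ∧ γ_{2k−1} + ψ̄_k ∧ γ_{2k} (where ψ̄_k, φ̄_k are linear combinations of the α_i, and the ψ̄_k are such that no nontrivial linear combination relation forces extra closed forms), the first Lie algebra cohomology H¹(g) is spanned by the classes [α₁],…,[α_s]; in particular dim H¹(g) = s and dim [g,g] = 2t + s. -/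

import Mathlib

/-- Let `g` be the Lie algebra with basis `A₁,…,A_s, B₁,…,B_s, C₁,…,C_{2t}`
whose dual differential satisfies `dα_i = 0`, `dβ_i = −α_i∧β_i`,
`dγ_{2k−1} = ψ̄_k∧γ_{2k−1} + φ̄_k∧γ_{2k}`, `dγ_{2k} = −φ̄_k∧γ_{2k−1} + ψ̄_k∧γ_{2k}`
(equivalently, with the bracket relations below), with generic coefficients (for each `k`
some `(ψ_{ik}, φ_{ik}) ≠ (0,0)`).  Then `H¹(g)` — the space of closed 1-forms, since there
are no exact ones — is spanned by the classes `[α₁],…,[α_s]`; in particular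
`dim H¹(g) = s` and `dim [g,g] = 2t + s`. -/
theorem first_cohomology_and_commutator_of_OT_algebra
    {L : Type*} [LieRing L] [LieAlgebra ℝ L]
    (s t : ℕ) (e : Module.Basis (Fin s ⊕ Fin s ⊕ (Fin t × Fin 2)) ℝ L)
    (ψ φv : Fin s → Fin t → ℝ)
    (hAA : ∀ i j, ⁅e (Sum.inl i), e (Sum.inl j)⁆ = (0 : L))
    (hAB : ∀ i j, ⁅e (Sum.inl i), e (Sum.inr (Sum.inl j))⁆ =
      if i = j then e (Sum.inr (Sum.inl j)) else 0)
    (hBB : ∀ i j, ⁅e (Sum.inr (Sum.inl i)), e (Sum.inr (Sum.inl j))⁆ = (0 : L))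
    (hBC : ∀ i k ε, ⁅e (Sum.inr (Sum.inl i)), e (Sum.inr (Sum.inr (k, ε)))⁆ = (0 : L))
    (hCC : ∀ k ε k' ε',
      ⁅e (Sum.inr (Sum.inr (k, ε))), e (Sum.inr (Sum.inr (k', ε')))⁆ = (0 : L))
    (hAC1 : ∀ i k, ⁅e (Sum.inl i), e (Sum.inr (Sum.inr (k, 0)))⁆ =
      -ψ i k • e (Sum.inr (Sum.inr (k, 0))) + φv i k • e (Sum.inr (Sum.inr (k, 1))))
    (hAC2 : ∀ i k, ⁅e (Sum.inl i), e (Sum.inr (Sum.inr (k, 1)))⁆ =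
      -φv i k • e (Sum.inr (Sum.inr (k, 0))) - ψ i k • e (Sum.inr (Sum.inr (k, 1))))
    (hgen : ∀ k, ∃ i, ψ i k ≠ 0 ∨ φv i k ≠ 0) :
    ({θ : Module.Dual ℝ L | ∀ x y : L, θ ⁅x, y⁆ = 0} =
        ↑(Submodule.span ℝ (Set.range fun i : Fin s => e.coord (Sum.inl i)))) ∧
    Module.finrank ℝ
        ↥(Submodule.span ℝ (Set.range fun i : Fin s => e.coord (Sum.inl i))) = s ∧
    Module.finrank ℝ
        ↥(LieSubmodule.toSubmodule ⁅(⊤ : LieIdeal ℝ L), (⊤ : LieIdeal ℝ L)⁆) =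
      2 * t + s := by
  classical
  set S : Submodule ℝ L :=
    Submodule.span ℝ (Set.range fun j : Fin s ⊕ Fin t × Fin 2 => e (Sum.inr j)) with hS
  have hmem : ∀ j : Fin s ⊕ Fin t × Fin 2, e (Sum.inr j) ∈ S :=
    fun j => Submodule.subset_span ⟨j, rfl⟩
  -- all brackets of basis vectors lie in S
  have hbasisAC : ∀ i k (ε : Fin 2), ⁅e (Sum.inl i), e (Sum.inr (Sum.inr (k, ε)))⁆ ∈ S := by
    intro i k ε
    fin_cases ε
    · show ⁅e (Sum.inl i), e (Sum.inr (Sum.inr (k, 0)))⁆ ∈ S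
      rw [hAC1 i k]
      exact S.add_mem (S.smul_mem _ (hmem (Sum.inr (k, 0)))) (S.smul_mem _ (hmem (Sum.inr (k, 1))))
    · show ⁅e (Sum.inl i), e (Sum.inr (Sum.inr (k, 1)))⁆ ∈ S
      rw [hAC2 i k]
      exact S.sub_mem (S.smul_mem _ (hmem (Sum.inr (k, 0)))) (S.smul_mem _ (hmem (Sum.inr (k, 1))))
  have hbasis : ∀ i j, ⁅e i, e j⁆ ∈ S := by
    have skew : ∀ x y : L, ⁅x, y⁆ ∈ S → ⁅y, x⁆ ∈ S := by
      intro x y h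
      rw [← lie_skew]
      exact S.neg_mem h
    rintro (i | i | ⟨k, ε⟩) (j | j | ⟨k', ε'⟩)
    · rw [hAA]; exact S.zero_mem
    · rw [hAB]
      split
      · exact hmem (Sum.inl j)
      · exact S.zero_mem
    · exact hbasisAC i k' ε'
    · apply skew
      rw [hAB]
      split
      · exact hmem (Sum.inl i)
      · exact S.zero_mem
    · rw [hBB]; exact S.zero_mem
    · rw [hBC]; exact S.zero_mem
    · exact skew _ _ (hbasisAC j k ε)
    · apply skew; rw [hBC]; exact S.zero_mem
    · rw [hCC]; exact S.zero_mem
  have htop : ∀ z : L, z ∈ Submodule.span ℝ (Set.range e) := by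
    intro z; rw [e.span_eq]; trivial
  have hxy : ∀ x y : L, ⁅x, y⁆ ∈ S := by
    intro x y
    refine Submodule.span_induction (p := fun x _ => ⁅x, y⁆ ∈ S) ?_ ?_ ?_ ?_ (htop x)
    · rintro _ ⟨i, rfl⟩
      refine Submodule.span_induction (p := fun y _ => ⁅e i, y⁆ ∈ S) ?_ ?_ ?_ ?_ (htop y)
      · rintro _ ⟨j, rfl⟩; exact hbasis i j
      · simp
      · intro a b _ _ ha hb; rw [lie_add]; exact S.add_mem ha hb
      · intro r a _ ha; rw [lie_smul]; exact S.smul_mem r ha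
    · simp
    · intro a b _ _ ha hb; rw [add_lie]; exact S.add_mem ha hb
    · intro r a _ ha; rw [smul_lie]; exact S.smul_mem r ha
  -- the commutator ideal equals S
  have hcomm : (LieSubmodule.toSubmodule ⁅(⊤ : LieIdeal ℝ L), (⊤ : LieIdeal ℝ L)⁆) = S := by
    apply le_antisymm
    · rw [LieSubmodule.lieIdeal_oper_eq_linear_span', Submodule.span_le]
      rintro z ⟨x, -, y, -, rfl⟩
      exact hxy x y
    · rw [hS, Submodule.span_le]
      rintro z ⟨j, rfl⟩
      have hmemT : ∀ x y : L,
          ⁅x, y⁆ ∈ LieSubmodule.toSubmodule ⁅(⊤ : LieIdeal ℝ L), (⊤ : LieIdeal ℝ L)⁆ := by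
        intro x y
        rw [LieSubmodule.mem_toSubmodule]
        exact LieSubmodule.lie_mem_lie (LieSubmodule.mem_top x) (LieSubmodule.mem_top y)
      set T := LieSubmodule.toSubmodule ⁅(⊤ : LieIdeal ℝ L), (⊤ : LieIdeal ℝ L)⁆ with hT
      rcases j with j | ⟨k, ε⟩
      · have h := hAB j j
        rw [if_pos rfl] at h
        show e (Sum.inr (Sum.inl j)) ∈ T
        rw [← h]
        exact hmemT _ _
      · obtain ⟨i, hi⟩ := hgen k
        have hne : ψ i k ^ 2 + φv i k ^ 2 ≠ 0 := by
          rcases hi with h | h <;> positivity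
        have hv1 := hmemT (e (Sum.inl i)) (e (Sum.inr (Sum.inr (k, 0))))
        have hv2 := hmemT (e (Sum.inl i)) (e (Sum.inr (Sum.inr (k, 1))))
        have h0 : (ψ i k ^ 2 + φv i k ^ 2) • e (Sum.inr (Sum.inr (k, 0))) ∈ T := by
          have heq : (ψ i k ^ 2 + φv i k ^ 2) • e (Sum.inr (Sum.inr (k, 0))) =
              (-ψ i k) • ⁅e (Sum.inl i), e (Sum.inr (Sum.inr (k, 0)))⁆ +
              (-φv i k) • ⁅e (Sum.inl i), e (Sum.inr (Sum.inr (k, 1)))⁆ := by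
            rw [hAC1 i k, hAC2 i k]; module
          rw [heq]
          exact T.add_mem (T.smul_mem _ hv1) (T.smul_mem _ hv2)
        have h1 : (ψ i k ^ 2 + φv i k ^ 2) • e (Sum.inr (Sum.inr (k, 1))) ∈ T := by
          have heq : (ψ i k ^ 2 + φv i k ^ 2) • e (Sum.inr (Sum.inr (k, 1))) =
              (φv i k) • ⁅e (Sum.inl i), e (Sum.inr (Sum.inr (k, 0)))⁆ +
              (-ψ i k) • ⁅e (Sum.inl i), e (Sum.inr (Sum.inr (k, 1)))⁆ := by
            rw [hAC1 i k, hAC2 i k]; module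
          rw [heq]
          exact T.add_mem (T.smul_mem _ hv1) (T.smul_mem _ hv2)
        fin_cases ε
        · exact (Submodule.smul_mem_iff T hne).mp h0
        · exact (Submodule.smul_mem_iff T hne).mp h1
  -- coordinates of A-vectors annihilate S
  have hcoordS : ∀ (i : Fin s), ∀ z ∈ S, e.coord (Sum.inl i) z = 0 := by
    intro i z hz
    have hle : S ≤ LinearMap.ker (e.coord (Sum.inl i)) := by
      rw [hS, Submodule.span_le]
      rintro _ ⟨j, rfl⟩
      simp [Module.Basis.coord_apply, Module.Basis.repr_self, Finsupp.single_apply]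
    exact hle hz
  -- closed 1-forms = dual annihilator of S = span of A-coordinates
  have hann2 : S.dualAnnihilator =
      Submodule.span ℝ (Set.range fun i : Fin s => e.coord (Sum.inl i)) := by
    apply le_antisymm
    · intro θ hθ
      rw [Submodule.mem_dualAnnihilator] at hθ
      have hrep := e.sum_dual_apply_smul_coord θ
      rw [← hrep, Fintype.sum_sum_type]
      have h2 : (∑ j : Fin s ⊕ Fin t × Fin 2, θ (e (Sum.inr j)) • e.coord (Sum.inr j)) = 0 := by
        apply Finset.sum_eq_zero
        intro j _
        rw [hθ _ (hmem j), zero_smul]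
      rw [h2, add_zero]
      exact Submodule.sum_mem _ fun i _ =>
        Submodule.smul_mem _ _ (Submodule.subset_span ⟨i, rfl⟩)
    · rw [Submodule.span_le]
      rintro _ ⟨i, rfl⟩
      rw [SetLike.mem_coe, Submodule.mem_dualAnnihilator]
      exact hcoordS i
  have hclosed : {θ : Module.Dual ℝ L | ∀ x y : L, θ ⁅x, y⁆ = 0} = ↑S.dualAnnihilator := by
    ext θ
    simp only [Set.mem_setOf_eq, SetLike.mem_coe, Submodule.mem_dualAnnihilator]
    constructor
    · intro hθ
      have hgenkill : ∀ j : Fin s ⊕ Fin t × Fin 2, θ (e (Sum.inr j)) = 0 := by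
        rintro (j | ⟨k, ε⟩)
        · have h := hθ (e (Sum.inl j)) (e (Sum.inr (Sum.inl j)))
          rw [hAB, if_pos rfl] at h
          exact h
        · obtain ⟨i, hi⟩ := hgen k
          have hne : ψ i k ^ 2 + φv i k ^ 2 ≠ 0 := by
            rcases hi with h | h <;> positivity
          have h1 := hθ (e (Sum.inl i)) (e (Sum.inr (Sum.inr (k, 0))))
          have h2 := hθ (e (Sum.inl i)) (e (Sum.inr (Sum.inr (k, 1))))
          rw [hAC1 i k] at h1
          rw [hAC2 i k] at h2
          rw [map_add, map_smul, map_smul, smul_eq_mul, smul_eq_mul] at h1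
          rw [map_sub, map_smul, map_smul, smul_eq_mul, smul_eq_mul] at h2
          set a := θ (e (Sum.inr (Sum.inr (k, 0)))) with ha
          set b := θ (e (Sum.inr (Sum.inr (k, 1)))) with hb
          have hA : (ψ i k ^ 2 + φv i k ^ 2) * a = 0 := by
            linear_combination (-ψ i k) * h1 + (-φv i k) * h2
          have hB : (ψ i k ^ 2 + φv i k ^ 2) * b = 0 := by
            linear_combination (φv i k) * h1 + (-ψ i k) * h2
          have ha0 : a = 0 := by
            rcases mul_eq_zero.mp hA with h | h
            · exact absurd h hne
            · exact h
          have hb0 : b = 0 := by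
            rcases mul_eq_zero.mp hB with h | h
            · exact absurd h hne
            · exact h
          fin_cases ε
          · exact ha0
          · exact hb0
      intro z hz
      have hle : S ≤ LinearMap.ker θ := by
        rw [hS, Submodule.span_le]
        rintro _ ⟨j, rfl⟩
        exact hgenkill j
      exact hle hz
    · intro hθ x y
      exact hθ _ (hxy x y)
  refine ⟨by rw [hclosed, hann2], ?_, ?_⟩
  · have hLI : LinearIndependent ℝ (fun i : Fin s => e.coord (Sum.inl i)) := by
      have h := e.dualBasis.linearIndependent.comp (fun i : Fin s => Sum.inl i)
        (fun a b h => by simpa using h)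
      simp only [Module.Basis.coe_dualBasis] at h; exact h
    rw [finrank_span_eq_card hLI, Fintype.card_fin]
  · have hLI : LinearIndependent ℝ (fun j : Fin s ⊕ Fin t × Fin 2 => e (Sum.inr j)) :=
      e.linearIndependent.comp Sum.inr Sum.inr_injective
    rw [hcomm, hS, finrank_span_eq_card hLI]
    simp [Fintype.card_sum, Fintype.card_prod]
    ring
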